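/- Fix μ ∈ (0,1) and θ, k > 0. Let φ : ℝ³ → ℝ satisfy ‖φ‖_{L^{∞,k}} < ∞ and [φ]_{log(1/C)^{−θ}} < ∞. Then [⟨v⟩^{(1−μ)k} φ]_{log(1/C)^{−θμ}} < ∞ and there is a constant C depending only on μ, θ, k such that [⟨v⟩^{(1−μ)k} φ]_{log(1/C)^{−θμ}} ≤ C·( ‖φ‖_{L^{∞,k}}^{1−μ} · [φ]_{log(1/C)^{−θ}}^{μ} + ‖φ‖_{L^{∞,((1−μ)k−1)₊}} ), where (·)₊ denotes the positive part. -/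

import Mathlib

noncomputable section

open Real Set

abbrev V3 := Fin 3 → ℝ

/-- Euclidean norm on `Fin d → ℝ`. -/
def eunorm {d : ℕ} (x : Fin d → ℝ) : ℝ := Real.sqrt (∑ i, (x i) ^ 2)

/-- The Japanese bracket `⟨v⟩ = (1+|v|²)^{1/2}`. -/
def jap {d : ℕ} (v : Fin d → ℝ) : ℝ := Real.sqrt (1 + ∑ i, (v i) ^ 2)

lemma eunorm_eq_norm (x : V3) : eunorm x = ‖(WithLp.equiv 2 (Fin 3 → ℝ)).symm x‖ := by
  rw [EuclideanSpace.norm_eq]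
  simp [eunorm, Real.norm_eq_abs, sq_abs]

lemma eunorm_lip (v v' : V3) : |eunorm v - eunorm v'| ≤ eunorm (v - v') := by
  rw [eunorm_eq_norm, eunorm_eq_norm, eunorm_eq_norm]
  have h : (WithLp.equiv 2 (Fin 3 → ℝ)).symm (v - v')
      = (WithLp.equiv 2 (Fin 3 → ℝ)).symm v - (WithLp.equiv 2 (Fin 3 → ℝ)).symm v' := rfl
  rw [h]
  exact abs_norm_sub_norm_le _ _

lemma eunorm_nonneg (x : V3) : 0 ≤ eunorm x := Real.sqrt_nonneg _

lemma one_le_jap (v : V3) : 1 ≤ jap v := by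
  have h : (0:ℝ) ≤ ∑ i, (v i) ^ 2 := Finset.sum_nonneg fun i _ => sq_nonneg _
  calc (1:ℝ) = Real.sqrt 1 := by simp
    _ ≤ jap v := Real.sqrt_le_sqrt (by linarith)

lemma jap_eq (v : V3) : jap v = Real.sqrt (1 + (eunorm v) ^ 2) := by
  rw [jap, eunorm, Real.sq_sqrt (Finset.sum_nonneg fun i _ => sq_nonneg _)]

lemma sqrt_one_add_sq_lip {A B : ℝ} (hA : 0 ≤ A) (hB : 0 ≤ B) :
    |Real.sqrt (1 + A ^ 2) - Real.sqrt (1 + B ^ 2)| ≤ |A - B| := by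
  have key : ∀ X Y : ℝ, 0 ≤ X → 0 ≤ Y →
      Real.sqrt (1 + X ^ 2) - Real.sqrt (1 + Y ^ 2) ≤ |X - Y| := by
    intro X Y hX hY
    have hY2 : (0:ℝ) ≤ 1 + Y ^ 2 := by positivity
    have hs := Real.sq_sqrt hY2
    have hsY : Y ≤ Real.sqrt (1 + Y ^ 2) := by
      nlinarith [Real.sqrt_nonneg (1 + Y ^ 2)]
    have hd : 0 ≤ |X - Y| := abs_nonneg _
    have h1 : 1 + X ^ 2 ≤ (Real.sqrt (1 + Y ^ 2) + |X - Y|) ^ 2 := by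
      nlinarith [le_abs_self (X - Y), sq_abs (X - Y), Real.sqrt_nonneg (1 + Y ^ 2)]
    have h2 : Real.sqrt (1 + X ^ 2) ≤ Real.sqrt (1 + Y ^ 2) + |X - Y| := by
      have := Real.sqrt_le_sqrt h1
      rwa [Real.sqrt_sq (by positivity)] at this
    linarith
  rw [abs_sub_le_iff]
  constructor
  · exact key A B hA hB
  · have := key B A hB hA
    rwa [abs_sub_comm] at this

lemma jap_lip (v v' : V3) : |jap v - jap v'| ≤ eunorm (v - v') := by
  rw [jap_eq, jap_eq]
  exact (sqrt_one_add_sq_lip (eunorm_nonneg v) (eunorm_nonneg v')).trans (eunorm_lip v v')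

/-- For `1 ≤ Y ≤ X` and `0 < a`: `X^a - Y^a ≤ a * X^(max (a-1) 0) * (X - Y)`. -/
lemma rpow_sub_rpow_le {a X Y : ℝ} (ha : 0 < a) (hY : 1 ≤ Y) (hXY : Y ≤ X) :
    X ^ a - Y ^ a ≤ a * X ^ (max (a - 1) 0) * (X - Y) := by
  have hY0 : (0:ℝ) < Y := lt_of_lt_of_le one_pos hY
  have hX0 : (0:ℝ) < X := lt_of_lt_of_le hY0 hXY
  rcases le_total a 1 with h1 | h1
  · -- a ≤ 1 : use (1+s)^a ≤ 1 + a s with s = X/Y - 1 ≥ 0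
    have hb : max (a - 1) 0 = 0 := max_eq_right (by linarith)
    rw [hb, Real.rpow_zero, mul_one]
    have hs : (-1:ℝ) ≤ X / Y - 1 := by
      have : 0 ≤ X / Y := le_of_lt (div_pos hX0 hY0)
      linarith
    have hB := rpow_one_add_le_one_add_mul_self hs ha.le h1
    rw [show (1:ℝ) + (X / Y - 1) = X / Y by ring] at hB
    have hXa : X ^ a = (X / Y) ^ a * Y ^ a := by
      rw [Real.div_rpow hX0.le hY0.le]
      field_simp
    have hYa1 : Y ^ a / Y ≤ 1 := by
      have : Y ^ (a - 1) ≤ 1 := Real.rpow_le_one_of_one_le_of_nonpos hY (by linarith)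
      rwa [Real.rpow_sub hY0, Real.rpow_one] at this
    have hYa0 : 0 < Y ^ a := Real.rpow_pos_of_pos hY0 a
    have step : X ^ a ≤ Y ^ a + a * ((X - Y) / Y) * Y ^ a := by
      calc X ^ a = (X / Y) ^ a * Y ^ a := hXa
        _ ≤ (1 + a * (X / Y - 1)) * Y ^ a := by
            apply mul_le_mul_of_nonneg_right hB hYa0.le
        _ = Y ^ a + a * ((X - Y) / Y) * Y ^ a := by
            field_simp
            try ring
    have h3 : a * ((X - Y) / Y) * Y ^ a = a * (X - Y) * (Y ^ a / Y) := by
      field_simp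
      try ring
    have h4 : a * (X - Y) * (Y ^ a / Y) ≤ a * (X - Y) * 1 := by
      apply mul_le_mul_of_nonneg_left hYa1
      have : 0 ≤ X - Y := by linarith
      positivity
    nlinarith [step, h3, h4]
  · -- a ≥ 1 : Bernoulli with s = Y/X - 1
    have hb : max (a - 1) 0 = a - 1 := max_eq_left (by linarith)
    rw [hb]
    have hs : (-1:ℝ) ≤ Y / X - 1 := by
      have : 0 ≤ Y / X := le_of_lt (div_pos hY0 hX0)
      linarith
    have hB := one_add_mul_self_le_rpow_one_add hs h1 (s := Y / X - 1)
    rw [show (1:ℝ) + (Y / X - 1) = Y / X by ring] at hB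
    have hYa : (Y / X) ^ a = Y ^ a / X ^ a := Real.div_rpow hY0.le hX0.le a
    have hXa0 : 0 < X ^ a := Real.rpow_pos_of_pos hX0 a
    -- multiply hB by X^a
    have step : (1 + a * (Y / X - 1)) * X ^ a ≤ Y ^ a := by
      rw [hYa] at hB
      calc (1 + a * (Y / X - 1)) * X ^ a ≤ (Y ^ a / X ^ a) * X ^ a :=
            mul_le_mul_of_nonneg_right hB hXa0.le
        _ = Y ^ a := by field_simp
    have hX1 : X ^ (a - 1) = X ^ a / X := by rw [Real.rpow_sub hX0, Real.rpow_one]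
    have h5 : (1 + a * (Y / X - 1)) * X ^ a = X ^ a - a * (X ^ a / X) * (X - Y) := by
      field_simp; ring
    rw [hX1]
    nlinarith [step, h5]

lemma min_le_rpow_interp {A B μ : ℝ} (hA : 0 ≤ A) (hB : 0 ≤ B) (h0 : 0 ≤ μ) (h1 : μ ≤ 1) :
    min A B ≤ A ^ μ * B ^ (1 - μ) := by
  rcases le_total A B with h | h
  · rw [min_eq_left h]
    rcases eq_or_lt_of_le hA with h' | h'
    · calc A = 0 := h'.symm
        _ ≤ A ^ μ * B ^ (1 - μ) := by positivity
    · have heq : A = A ^ μ * A ^ (1 - μ) := by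
        rw [← Real.rpow_add h', show μ + (1 - μ) = 1 by ring, Real.rpow_one]
      nth_rewrite 1 [heq]
      exact mul_le_mul_of_nonneg_left (Real.rpow_le_rpow hA h (by linarith : (0:ℝ) ≤ 1 - μ))
        (Real.rpow_nonneg hA _)
  · rw [min_eq_right h]
    rcases eq_or_lt_of_le hB with h' | h'
    · calc B = 0 := h'.symm
        _ ≤ A ^ μ * B ^ (1 - μ) := by positivity
    · have heq : B = B ^ μ * B ^ (1 - μ) := by
        rw [← Real.rpow_add h', show μ + (1 - μ) = 1 by ring, Real.rpow_one]
      nth_rewrite 1 [heq]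
      exact mul_le_mul_of_nonneg_right (Real.rpow_le_rpow hB h h0)
        (Real.rpow_nonneg hB _)

/-- `r ≤ (2c)^c * (log (1/r))^(-c)` for `0 < r < 1/2`, `c > 0`. -/
lemma r_le_log_bound {c r : ℝ} (hc : 0 < c) (hr0 : 0 < r) (hr : r < 1/2) :
    r ≤ (2 * c) ^ c * Real.log (1 / r) ^ (-c) := by
  set L := Real.log (1 / r) with hLdef
  have h1r : (1:ℝ) < 1 / r := by rw [lt_div_iff₀ hr0]; linarith
  have hL : 0 < L := Real.log_pos h1r
  have hr1 : r < 1 := by linarith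
  -- L ≤ 2c * (1/r)^(1/(2c))
  have hstep : L ≤ 2 * c * (1 / r) ^ (1 / (2 * c)) := by
    have hpos : (0:ℝ) < (1 / r) ^ (1 / (2 * c)) :=
      Real.rpow_pos_of_pos (by positivity) _
    have hlog : Real.log ((1 / r) ^ (1 / (2 * c))) = (1 / (2 * c)) * L :=
      Real.log_rpow (by positivity) _
    have := Real.log_le_sub_one_of_pos hpos
    rw [hlog] at this
    have h2c : (0:ℝ) < 2 * c := by positivity
    rw [div_mul_eq_mul_div, one_mul, div_le_iff₀ h2c] at this
    nlinarith
  -- L^c ≤ (2c)^c * (1/r)^(1/2)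
  have hLc : L ^ c ≤ (2 * c) ^ c * (1 / r) ^ (1 / 2 : ℝ) := by
    have h1 : L ^ c ≤ (2 * c * (1 / r) ^ (1 / (2 * c))) ^ c :=
      Real.rpow_le_rpow hL.le hstep hc.le
    have h2 : (2 * c * (1 / r) ^ (1 / (2 * c))) ^ c
        = (2 * c) ^ c * ((1 / r) ^ (1 / (2 * c))) ^ c := by
      rw [Real.mul_rpow (by positivity) (by positivity)]
    have h3 : ((1 / r) ^ (1 / (2 * c))) ^ c = (1 / r) ^ (1 / 2 : ℝ) := by
      rw [← Real.rpow_mul (by positivity)]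
      congr 1
      field_simp
    rw [h2, h3] at h1
    exact h1
  -- conclude
  rw [Real.rpow_neg hL.le, ← div_eq_mul_inv, le_div_iff₀ (Real.rpow_pos_of_pos hL c)]
  have key : r * ((1 / r) ^ (1 / 2 : ℝ)) ≤ 1 := by
    have hs : (1 / r) ^ (1 / 2 : ℝ) = (r ^ (1 / 2 : ℝ))⁻¹ := by
      rw [one_div, Real.inv_rpow hr0.le]
    have hsq : r ^ (1 / 2 : ℝ) * r ^ (1 / 2 : ℝ) = r := by
      rw [← Real.rpow_add hr0]; norm_num
    have hspos : 0 < r ^ (1 / 2 : ℝ) := Real.rpow_pos_of_pos hr0 _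
    have hle1 : r ^ (1 / 2 : ℝ) ≤ 1 := Real.rpow_le_one hr0.le hr1.le (by norm_num)
    rw [hs]
    rw [mul_inv_le_iff₀ hspos, one_mul]
    nlinarith
  calc r * L ^ c ≤ r * ((2 * c) ^ c * (1 / r) ^ (1 / 2 : ℝ)) := by
        apply mul_le_mul_of_nonneg_left hLc hr0.le
    _ = (2 * c) ^ c * (r * (1 / r) ^ (1 / 2 : ℝ)) := by ring
    _ ≤ (2 * c) ^ c * 1 := by
        apply mul_le_mul_of_nonneg_left key (Real.rpow_nonneg (by positivity) c)
    _ = (2 * c) ^ c := mul_one _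

set_option maxHeartbeats 1600000 in
/-- **Interpolation of weights between `L^{∞,k}` and log-Hölder spaces** (Lemma B.1).
Here `Kk` bounds `‖φ‖_{L^{∞,k}}`, `Ks` bounds `[φ]_{log(1/C)^{−θ}}` and `Kp` bounds
`‖φ‖_{L^{∞,((1−μ)k−1)₊}}`; the constant `C` depends only on `μ`, `θ`, `k`. -/
theorem weight_log_holder_interpolation (μ θ k : ℝ)
    (hμ : μ ∈ Set.Ioo (0:ℝ) 1) (hθ : 0 < θ) (hk : 0 < k) :
    ∃ C : ℝ, 0 < C ∧
      ∀ (φ : V3 → ℝ) (Kk Ks Kp : ℝ),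
        -- `‖φ‖_{L^{∞,k}} ≤ Kk`
        (∀ v : V3, jap v ^ k * |φ v| ≤ Kk) →
        -- `[φ]_{log(1/C)^{−θ}} ≤ Ks`
        (∀ v v' : V3, 0 < eunorm (v - v') → eunorm (v - v') < 1/2 →
          |φ v - φ v'| ≤ Ks * Real.log (1 / eunorm (v - v')) ^ (-θ)) →
        -- `‖φ‖_{L^{∞,((1−μ)k−1)₊}} ≤ Kp`
        (∀ v : V3, jap v ^ (max ((1 - μ) * k - 1) 0) * |φ v| ≤ Kp) →
        -- conclusion: `[⟨v⟩^{(1−μ)k} φ]_{log(1/C)^{−θμ}} ≤ C (Kk^{1−μ} Ks^μ + Kp)`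
        ∀ v v' : V3, 0 < eunorm (v - v') → eunorm (v - v') < 1/2 →
          |jap v ^ ((1 - μ) * k) * φ v - jap v' ^ ((1 - μ) * k) * φ v'| ≤
            C * (Kk ^ (1 - μ) * Ks ^ μ + Kp) *
              Real.log (1 / eunorm (v - v')) ^ (-(θ * μ)) := by
  obtain ⟨hμ0, hμ1⟩ := hμ
  have ha : 0 < (1 - μ) * k := by nlinarith
  have h2k : (0:ℝ) < 2 ^ k := Real.rpow_pos_of_pos two_pos k
  have h2k0 : (0:ℝ) ≤ 1 + 2 ^ k := by linarith
  have hb0 : (0:ℝ) ≤ max ((1 - μ) * k - 1) 0 := le_max_right _ _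
  have h2b : (0:ℝ) < 2 ^ (max ((1 - μ) * k - 1) 0) := Real.rpow_pos_of_pos two_pos _
  have hc : 0 < θ * μ := mul_pos hθ hμ0
  have h2c : (0:ℝ) < (2 * (θ * μ)) ^ (θ * μ) := Real.rpow_pos_of_pos (by linarith) _
  have hc1 : (0:ℝ) < (1 + 2 ^ k) ^ (1 - μ) := Real.rpow_pos_of_pos (by linarith) _
  set c2 : ℝ := (1 - μ) * k * 2 ^ (max ((1 - μ) * k - 1) 0) * (2 * (θ * μ)) ^ (θ * μ)
    with hc2def
  have hc2 : 0 < c2 := by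
    rw [hc2def]; positivity
  refine ⟨(1 + 2 ^ k) ^ (1 - μ) + c2 + 1, by positivity, ?_⟩
  intro φ Kk Ks Kp hKk hKs hKp v v' hr0 hr2
  set r := eunorm (v - v') with hrdef
  set L := Real.log (1 / r) with hLdef
  have hL : 0 < L := Real.log_pos (by rw [lt_div_iff₀ hr0]; linarith)
  have hX1 : 1 ≤ jap v := one_le_jap v
  have hY1 : 1 ≤ jap v' := one_le_jap v'
  have hX0 : (0:ℝ) < jap v := lt_of_lt_of_le one_pos hX1
  have hY0 : (0:ℝ) < jap v' := lt_of_lt_of_le one_pos hY1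
  have hlip : |jap v - jap v'| ≤ r := jap_lip v v'
  have hlip' := abs_sub_le_iff.mp hlip
  have hXY2 : jap v ≤ 2 * jap v' := by
    have := hlip'.1; linarith
  have hYX2 : jap v' ≤ 2 * jap v := by
    have := hlip'.2; linarith
  -- nonnegativity of the constants
  have hKk0 : 0 ≤ Kk :=
    le_trans (mul_nonneg (Real.rpow_nonneg hX0.le k) (abs_nonneg _)) (hKk v)
  have hKp0 : 0 ≤ Kp :=
    le_trans (mul_nonneg (Real.rpow_nonneg hX0.le _) (abs_nonneg _)) (hKp v)
  have hKs0 : 0 ≤ Ks := by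
    have h := hKs v v' hr0 hr2
    have hp : 0 < L ^ (-θ) := Real.rpow_pos_of_pos hL _
    nlinarith [abs_nonneg (φ v - φ v')]
  -- pointwise bounds on φ
  have hφv : |φ v| ≤ Kk * jap v ^ (-k) := by
    have hp : 0 < jap v ^ k := Real.rpow_pos_of_pos hX0 k
    rw [Real.rpow_neg hX0.le, ← div_eq_mul_inv, le_div_iff₀ hp, mul_comm]
    exact hKk v
  have hφv' : |φ v'| ≤ Kk * jap v' ^ (-k) := by
    have hp : 0 < jap v' ^ k := Real.rpow_pos_of_pos hY0 k
    rw [Real.rpow_neg hY0.le, ← div_eq_mul_inv, le_div_iff₀ hp, mul_comm]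
    exact hKk v'
  have hYmk : jap v' ^ (-k) ≤ 2 ^ k * jap v ^ (-k) := by
    have h2 : (0:ℝ) < jap v / 2 := by linarith
    have h := Real.rpow_le_rpow_of_nonpos h2 (by linarith : jap v / 2 ≤ jap v')
      (neg_nonpos.mpr hk.le)
    have he : (jap v / 2) ^ (-k) = 2 ^ k * jap v ^ (-k) := by
      rw [Real.div_rpow hX0.le (by norm_num : (0:ℝ) ≤ 2), Real.rpow_neg (by norm_num : (0:ℝ) ≤ 2),
        div_inv_eq_mul]
      ring
    rw [he] at h
    exact h
  have hmin2 : |φ v - φ v'| ≤ (1 + 2 ^ k) * Kk * jap v ^ (-k) := by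
    have htri : |φ v - φ v'| ≤ |φ v| + |φ v'| := by
      simpa [sub_eq_add_neg] using abs_add_le (φ v) (-(φ v'))
    have h2 : |φ v'| ≤ Kk * (2 ^ k * jap v ^ (-k)) :=
      hφv'.trans (mul_le_mul_of_nonneg_left hYmk hKk0)
    calc |φ v - φ v'| ≤ |φ v| + |φ v'| := htri
      _ ≤ Kk * jap v ^ (-k) + Kk * (2 ^ k * jap v ^ (-k)) := add_le_add hφv h2
      _ = (1 + 2 ^ k) * Kk * jap v ^ (-k) := by ring
  -- interpolation bound on |φ v - φ v'|
  have hφbound : |φ v - φ v'| ≤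
      (Ks * L ^ (-θ)) ^ μ * ((1 + 2 ^ k) * Kk * jap v ^ (-k)) ^ (1 - μ) := by
    refine le_trans (le_min (hKs v v' hr0 hr2) hmin2) ?_
    exact min_le_rpow_interp (mul_nonneg hKs0 (Real.rpow_nonneg hL.le _))
      (mul_nonneg (mul_nonneg h2k0 hKk0) (Real.rpow_nonneg hX0.le _)) hμ0.le hμ1.le
  -- first term
  have hT1 : jap v ^ ((1 - μ) * k) * |φ v - φ v'| ≤
      (1 + 2 ^ k) ^ (1 - μ) * (Kk ^ (1 - μ) * Ks ^ μ) * L ^ (-(θ * μ)) := by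
    have e1 : (Ks * L ^ (-θ)) ^ μ = Ks ^ μ * L ^ (-(θ * μ)) := by
      rw [Real.mul_rpow hKs0 (Real.rpow_nonneg hL.le _), ← Real.rpow_mul hL.le, neg_mul]
    have e2 : ((1 + 2 ^ k) * Kk * jap v ^ (-k)) ^ (1 - μ)
        = (1 + 2 ^ k) ^ (1 - μ) * Kk ^ (1 - μ) * jap v ^ (-k * (1 - μ)) := by
      rw [Real.mul_rpow (mul_nonneg h2k0 hKk0) (Real.rpow_nonneg hX0.le _),
        Real.mul_rpow h2k0 hKk0, ← Real.rpow_mul hX0.le]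
    have e3 : jap v ^ ((1 - μ) * k) * jap v ^ (-k * (1 - μ)) = 1 := by
      rw [← Real.rpow_add hX0, show (1 - μ) * k + -k * (1 - μ) = 0 by ring, Real.rpow_zero]
    calc jap v ^ ((1 - μ) * k) * |φ v - φ v'|
        ≤ jap v ^ ((1 - μ) * k) *
            ((Ks * L ^ (-θ)) ^ μ * ((1 + 2 ^ k) * Kk * jap v ^ (-k)) ^ (1 - μ)) :=
          mul_le_mul_of_nonneg_left hφbound (Real.rpow_nonneg hX0.le _)
      _ = (1 + 2 ^ k) ^ (1 - μ) * (Kk ^ (1 - μ) * Ks ^ μ) * L ^ (-(θ * μ)) *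
            (jap v ^ ((1 - μ) * k) * jap v ^ (-k * (1 - μ))) := by
          rw [e1, e2]; ring
      _ = (1 + 2 ^ k) ^ (1 - μ) * (Kk ^ (1 - μ) * Ks ^ μ) * L ^ (-(θ * μ)) := by
          rw [e3, mul_one]
  -- second term
  have habs : |jap v ^ ((1 - μ) * k) - jap v' ^ ((1 - μ) * k)| ≤
      (1 - μ) * k * (2 * jap v') ^ (max ((1 - μ) * k - 1) 0) * r := by
    have h2Y : (0:ℝ) ≤ (2 * jap v') ^ (max ((1 - μ) * k - 1) 0) :=
      Real.rpow_nonneg (by linarith) _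
    rcases le_total (jap v') (jap v) with hYX | hXY
    · rw [abs_of_nonneg (sub_nonneg.mpr (Real.rpow_le_rpow hY0.le hYX ha.le))]
      have h := rpow_sub_rpow_le ha hY1 hYX
      have hXb : jap v ^ (max ((1 - μ) * k - 1) 0) ≤ (2 * jap v') ^ (max ((1 - μ) * k - 1) 0) :=
        Real.rpow_le_rpow hX0.le hXY2 hb0
      calc jap v ^ ((1 - μ) * k) - jap v' ^ ((1 - μ) * k)
          ≤ (1 - μ) * k * jap v ^ (max ((1 - μ) * k - 1) 0) * (jap v - jap v') := h
        _ ≤ (1 - μ) * k * (2 * jap v') ^ (max ((1 - μ) * k - 1) 0) * r := by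
            apply mul_le_mul (mul_le_mul_of_nonneg_left hXb ha.le)
              ((le_abs_self _).trans hlip) (by linarith) (by positivity)
    · rw [abs_of_nonpos (sub_nonpos.mpr (Real.rpow_le_rpow hX0.le hXY ha.le)), neg_sub]
      have h := rpow_sub_rpow_le ha hX1 hXY
      have hYb : jap v' ^ (max ((1 - μ) * k - 1) 0) ≤ (2 * jap v') ^ (max ((1 - μ) * k - 1) 0) :=
        Real.rpow_le_rpow hY0.le (by linarith) hb0
      calc jap v' ^ ((1 - μ) * k) - jap v ^ ((1 - μ) * k)
          ≤ (1 - μ) * k * jap v' ^ (max ((1 - μ) * k - 1) 0) * (jap v' - jap v) := h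
        _ ≤ (1 - μ) * k * (2 * jap v') ^ (max ((1 - μ) * k - 1) 0) * r := by
            apply mul_le_mul (mul_le_mul_of_nonneg_left hYb ha.le)
              ((neg_le_abs _).trans_eq' (by rw [neg_sub]) |>.trans hlip)
              (by linarith) (by positivity)
  have hT2 : |jap v ^ ((1 - μ) * k) - jap v' ^ ((1 - μ) * k)| * |φ v'| ≤
      c2 * Kp * L ^ (-(θ * μ)) := by
    have he : (2 * jap v') ^ (max ((1 - μ) * k - 1) 0)
        = 2 ^ (max ((1 - μ) * k - 1) 0) * jap v' ^ (max ((1 - μ) * k - 1) 0) :=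
      Real.mul_rpow (by norm_num) hY0.le
    have step1 : |jap v ^ ((1 - μ) * k) - jap v' ^ ((1 - μ) * k)| * |φ v'| ≤
        (1 - μ) * k * 2 ^ (max ((1 - μ) * k - 1) 0) * r *
          (jap v' ^ (max ((1 - μ) * k - 1) 0) * |φ v'|) := by
      have h1 := mul_le_mul_of_nonneg_right habs (abs_nonneg (φ v'))
      calc |jap v ^ ((1 - μ) * k) - jap v' ^ ((1 - μ) * k)| * |φ v'|
          ≤ (1 - μ) * k * (2 * jap v') ^ (max ((1 - μ) * k - 1) 0) * r * |φ v'| := h1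
        _ = (1 - μ) * k * 2 ^ (max ((1 - μ) * k - 1) 0) * r *
              (jap v' ^ (max ((1 - μ) * k - 1) 0) * |φ v'|) := by rw [he]; ring
    have step2 : (1 - μ) * k * 2 ^ (max ((1 - μ) * k - 1) 0) * r *
          (jap v' ^ (max ((1 - μ) * k - 1) 0) * |φ v'|) ≤
        (1 - μ) * k * 2 ^ (max ((1 - μ) * k - 1) 0) * r * Kp := by
      apply mul_le_mul_of_nonneg_left (hKp v')
      positivity
    have hrL : r ≤ (2 * (θ * μ)) ^ (θ * μ) * L ^ (-(θ * μ)) := by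
      have := r_le_log_bound hc hr0 hr2
      rwa [← hLdef] at this
    have step3 : (1 - μ) * k * 2 ^ (max ((1 - μ) * k - 1) 0) * r * Kp ≤
        c2 * Kp * L ^ (-(θ * μ)) := by
      rw [hc2def]
      calc (1 - μ) * k * 2 ^ (max ((1 - μ) * k - 1) 0) * r * Kp
          ≤ (1 - μ) * k * 2 ^ (max ((1 - μ) * k - 1) 0) *
              ((2 * (θ * μ)) ^ (θ * μ) * L ^ (-(θ * μ))) * Kp := by
            apply mul_le_mul_of_nonneg_right _ hKp0
            apply mul_le_mul_of_nonneg_left hrL (by positivity)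
        _ = (1 - μ) * k * 2 ^ (max ((1 - μ) * k - 1) 0) * (2 * (θ * μ)) ^ (θ * μ) * Kp *
              L ^ (-(θ * μ)) := by ring
    exact (step1.trans step2).trans step3
  -- combine
  have hsplit : |jap v ^ ((1 - μ) * k) * φ v - jap v' ^ ((1 - μ) * k) * φ v'| ≤
      jap v ^ ((1 - μ) * k) * |φ v - φ v'| +
      |jap v ^ ((1 - μ) * k) - jap v' ^ ((1 - μ) * k)| * |φ v'| := by
    have heq : jap v ^ ((1 - μ) * k) * φ v - jap v' ^ ((1 - μ) * k) * φ v'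
        = jap v ^ ((1 - μ) * k) * (φ v - φ v') +
          (jap v ^ ((1 - μ) * k) - jap v' ^ ((1 - μ) * k)) * φ v' := by ring
    rw [heq]
    refine (abs_add_le _ _).trans ?_
    rw [abs_mul, abs_mul, abs_of_nonneg (Real.rpow_nonneg hX0.le _)]
  have hS0 : 0 ≤ Kk ^ (1 - μ) * Ks ^ μ :=
    mul_nonneg (Real.rpow_nonneg hKk0 _) (Real.rpow_nonneg hKs0 _)
  have hE0 : 0 ≤ L ^ (-(θ * μ)) := Real.rpow_nonneg hL.le _
  have hSE : 0 ≤ Kk ^ (1 - μ) * Ks ^ μ * L ^ (-(θ * μ)) := mul_nonneg hS0 hE0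
  have hKpE : 0 ≤ Kp * L ^ (-(θ * μ)) := mul_nonneg hKp0 hE0
  calc |jap v ^ ((1 - μ) * k) * φ v - jap v' ^ ((1 - μ) * k) * φ v'|
      ≤ jap v ^ ((1 - μ) * k) * |φ v - φ v'| +
        |jap v ^ ((1 - μ) * k) - jap v' ^ ((1 - μ) * k)| * |φ v'| := hsplit
    _ ≤ (1 + 2 ^ k) ^ (1 - μ) * (Kk ^ (1 - μ) * Ks ^ μ) * L ^ (-(θ * μ)) +
        c2 * Kp * L ^ (-(θ * μ)) := add_le_add hT1 hT2
    _ ≤ ((1 + 2 ^ k) ^ (1 - μ) + c2 + 1) * (Kk ^ (1 - μ) * Ks ^ μ + Kp) * L ^ (-(θ * μ)) := by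
        nlinarith [mul_nonneg hc1.le hKpE, mul_nonneg hc2.le hSE, hSE, hKpE,
          mul_nonneg hc1.le hSE, mul_nonneg hc2.le hKpE]
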